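/- For all real z > 0 and all real ν > 1/2, one has cosh(z)^{1/(2(ν+1))} < Γ(ν+1) · (2/z)^ν · I_ν(z) < cosh(z). -/

import Mathlib

/-- The modified Bessel function of the first kind of order `ν`, defined for `z > 0` by
`I_ν(z) = ∑_{k=0}^∞ (1/(k! Γ(ν+k+1))) (z/2)^(ν+2k)`. -/
noncomputable def besselI (ν z : ℝ) : ℝ :=
  ∑' k : ℕ, (1 / (k.factorial * Real.Gamma (ν + (k : ℝ) + 1))) * (z / 2) ^ (ν + 2 * (k : ℝ))

open Real

lemma hasDerivAt_tanh (x : ℝ) : HasDerivAt Real.tanh (1 / Real.cosh x ^ 2) x := by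
  have h := (Real.hasDerivAt_sinh x).div (Real.hasDerivAt_cosh x) (Real.cosh_pos x).ne'
  have e : Real.tanh = fun y => Real.sinh y / Real.cosh y :=
    funext fun y => Real.tanh_eq_sinh_div_cosh y
  rw [e]
  have := Real.cosh_sq_sub_sinh_sq x
  exact h.congr_deriv (by rw [show Real.cosh x * Real.cosh x - Real.sinh x * Real.sinh x = 1 by nlinarith])

lemma tanh_mul_lt {a z : ℝ} (ha0 : 0 < a) (ha1 : a < 1) (hz : 0 < z) :
    a * Real.tanh z < Real.tanh (a * z) := by
  set r : ℝ → ℝ := fun x => Real.tanh (a * x) - a * Real.tanh x with hr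
  have hd : ∀ x : ℝ, HasDerivAt r (1 / Real.cosh (a * x) ^ 2 * a - a * (1 / Real.cosh x ^ 2)) x := by
    intro x
    have := ((hasDerivAt_tanh (a * x)).comp x ((hasDerivAt_id x).const_mul a)).sub
      ((hasDerivAt_tanh x).const_mul a)
    exact this.congr_deriv (by ring)
  have mono : StrictMonoOn r (Set.Ici (0:ℝ)) := by
    apply strictMonoOn_of_deriv_pos (convex_Ici 0)
    · exact (fun x _ => ((hd x).differentiableAt.continuousAt).continuousWithinAt)
    · intro x hx
      rw [interior_Ici] at hx
      have hx' : (0:ℝ) < x := hx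
      rw [(hd x).deriv]
      have hax : Real.cosh (a * x) < Real.cosh x := by
        apply Real.cosh_lt_cosh.mpr
        rw [abs_of_pos (by positivity), abs_of_pos hx']
        nlinarith
      have h1 : (0:ℝ) < Real.cosh (a*x) := Real.cosh_pos _
      have h2 : (0:ℝ) < Real.cosh x := Real.cosh_pos _
      have : 1 / Real.cosh x ^ 2 < 1 / Real.cosh (a*x) ^ 2 := by
        apply one_div_lt_one_div_of_lt (by positivity)
        nlinarith
      nlinarith
  have := mono (Set.self_mem_Ici) (Set.mem_Ici.mpr hz.le) hz
  simp only [hr, Real.tanh_zero, mul_zero, sub_zero] at this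
  linarith [this]

lemma log_cosh_lt {a z : ℝ} (ha0 : 0 < a) (ha1 : a < 1) (hz : 0 < z) :
    a ^ 2 * Real.log (Real.cosh z) < Real.log (Real.cosh (a * z)) := by
  set q : ℝ → ℝ := fun x => Real.log (Real.cosh (a * x)) - a ^ 2 * Real.log (Real.cosh x)
    with hqdef
  have hd : ∀ x : ℝ, HasDerivAt q
      (a * (Real.sinh (a*x) / Real.cosh (a*x)) - a ^ 2 * (Real.sinh x / Real.cosh x)) x := by
    intro x
    have h1 : HasDerivAt (fun y => Real.log (Real.cosh (a * y)))
        (Real.sinh (a*x) * (a * 1) / Real.cosh (a*x)) x :=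
      (((Real.hasDerivAt_cosh (a*x)).comp x ((hasDerivAt_id x).const_mul a)).log
        (Real.cosh_pos _).ne')
    have h2 : HasDerivAt (fun y => a ^ 2 * Real.log (Real.cosh y))
        (a ^ 2 * (Real.sinh x / Real.cosh x)) x := by
      have := ((Real.hasDerivAt_cosh x).log (Real.cosh_pos _).ne').const_mul (a ^ 2)
      simpa using this
    have := h1.sub h2
    exact this.congr_deriv (by ring)
  have mono : StrictMonoOn q (Set.Ici (0:ℝ)) := by
    apply strictMonoOn_of_deriv_pos (convex_Ici 0)
    · exact fun x _ => ((hd x).differentiableAt.continuousAt).continuousWithinAt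
    · intro x hx
      rw [interior_Ici] at hx
      have hx' : (0:ℝ) < x := hx
      rw [(hd x).deriv]
      have ht := tanh_mul_lt ha0 ha1 hx'
      rw [Real.tanh_eq_sinh_div_cosh, Real.tanh_eq_sinh_div_cosh] at ht
      nlinarith
  have := mono (Set.self_mem_Ici) (Set.mem_Ici.mpr hz.le) hz
  simp only [hqdef, mul_zero, Real.cosh_zero, Real.log_one, sub_zero] at this
  linarith

lemma cosh_rpow_lt {a z : ℝ} (ha0 : 0 < a) (ha1 : a < 1) (hz : 0 < z) :
    Real.cosh z ^ (a ^ 2) < Real.cosh (a * z) := by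
  rw [← Real.exp_log (Real.cosh_pos (a*z)), Real.rpow_def_of_pos (Real.cosh_pos z)]
  exact Real.exp_lt_exp.mpr (by rw [mul_comm]; exact log_cosh_lt ha0 ha1 hz)
open Finset

lemma gamma_prod (ν : ℝ) (hν : 0 < ν) (k : ℕ) :
    Real.Gamma (ν + k + 1) = Real.Gamma (ν + 1) * ∏ j ∈ Finset.range k, (ν + j + 1) := by
  induction k with
  | zero => simp
  | succ n ih =>
    have h : (ν + ((n:ℕ)+1:ℕ) + 1 : ℝ) = (ν + n + 1) + 1 := by push_cast; ring
    rw [h, Real.Gamma_add_one (by positivity), ih, Finset.prod_range_succ]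
    ring

lemma prod_pos' (ν : ℝ) (hν : 0 < ν) (k : ℕ) :
    0 < ∏ j ∈ Finset.range k, (ν + j + 1) :=
  Finset.prod_pos fun j _ => by positivity

lemma one_le_prod'' (ν : ℝ) (hν : 0 < ν) (k : ℕ) :
    1 ≤ ∏ j ∈ Finset.range k, (ν + j + 1) := by
  calc (1:ℝ) = ∏ _j ∈ Finset.range k, (1:ℝ) := by simp
    _ ≤ ∏ j ∈ Finset.range k, (ν + j + 1) := by
        apply Finset.prod_le_prod (fun j _ => zero_le_one)
        intro j _
        have hj : (0:ℝ) ≤ (j:ℝ) := Nat.cast_nonneg j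
        linarith

lemma F_eq (ν z : ℝ) (hz : 0 < z) (hν : 1/2 < ν) :
    Real.Gamma (ν + 1) * (2 / z) ^ ν * besselI ν z
      = ∑' k : ℕ, ((z/2)^2)^k / (k.factorial * ∏ j ∈ Finset.range k, (ν + j + 1)) := by
  rw [besselI, ← tsum_mul_left]
  congr 1; funext k
  have hz2 : (0:ℝ) < z/2 := by linarith
  have hG : 0 < Real.Gamma (ν+1) := Real.Gamma_pos_of_pos (by linarith)
  have hP := prod_pos' ν (by linarith) k
  have hpow : (z/2) ^ (ν + 2*(k:ℝ)) = (z/2)^ν * ((z/2)^2)^k := by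
    rw [Real.rpow_add hz2, ← pow_mul]
    congr 1
    rw [show (2*(k:ℝ)) = ((2*k : ℕ) : ℝ) by push_cast; ring, Real.rpow_natCast]
  have hone : (2/z) ^ ν * (z/2) ^ ν = 1 := by
    rw [← Real.mul_rpow (by positivity) (by positivity),
      show (2/z)*(z/2) = 1 by field_simp, Real.one_rpow]
  rw [gamma_prod ν (by linarith) k, hpow]
  have hkf : ((k.factorial : ℝ)) ≠ 0 := by positivity
  calc Real.Gamma (ν+1) * (2/z)^ν *
        ((1 / (k.factorial * (Real.Gamma (ν+1) * ∏ j ∈ Finset.range k, (ν + j + 1))))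
          * ((z/2)^ν * ((z/2)^2)^k))
      = ((2/z)^ν * (z/2)^ν) * (Real.Gamma (ν+1) *
          (1 / (k.factorial * (Real.Gamma (ν+1) * ∏ j ∈ Finset.range k, (ν + j + 1))))
          * ((z/2)^2)^k) := by ring
    _ = ((z/2)^2)^k / (k.factorial * ∏ j ∈ Finset.range k, (ν + j + 1)) := by
        rw [hone, one_mul]
        field_simp

lemma summable_b (ν z : ℝ) (hν : 1/2 < ν) :
    Summable (fun k : ℕ => ((z/2)^2)^k / (k.factorial * ∏ j ∈ Finset.range k, (ν + j + 1))) := by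
  apply Summable.of_nonneg_of_le
    (fun k => by
      have hP := prod_pos' ν (by linarith) k
      positivity)
    (fun k => ?_) (Real.summable_pow_div_factorial ((z/2)^2))
  have hP := prod_pos' ν (by linarith) k
  have h1 := one_le_prod'' ν (by linarith) k
  have hkf : (0:ℝ) < (k.factorial : ℝ) := by positivity
  apply div_le_div_of_nonneg_left (by positivity) hkf
  nlinarith

-- upper-bound core
lemma L1 (ν : ℝ) (hν : 1/2 < ν) (k : ℕ) :
    ((2*k).factorial : ℝ) ≤ 4^k * k.factorial * ∏ j ∈ Finset.range k, (ν + j + 1) := by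
  induction k with
  | zero => simp
  | succ n ih =>
    have hP := prod_pos' ν (by linarith) n
    have hn : (0:ℝ) ≤ n := Nat.cast_nonneg n
    have e1 : 2*(n+1) = (2*n+1)+1 := by ring
    rw [e1, Nat.factorial_succ, Nat.factorial_succ, Nat.factorial_succ,
      Finset.prod_range_succ, pow_succ]
    push_cast
    have hfac : (0:ℝ) < (2*n).factorial := by positivity
    have h2 : ((2*(n:ℝ)+1)+1) * ((2*n+1)) ≤ 4 * ((n+1) * (ν + n + 1)) := by nlinarith
    calc ((2*(n:ℝ)+1)+1) * ((2*(n:ℝ)+1) * (2*n).factorial)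
        = ((2*n).factorial : ℝ) * (((2*(n:ℝ)+1)+1) * ((2*n+1))) := by ring
      _ ≤ (4^n * n.factorial * ∏ j ∈ Finset.range n, (ν + j + 1)) * (4 * ((n+1) * (ν + n + 1))) := by
          apply mul_le_mul ih h2 (by positivity) (by positivity)
      _ = 4 ^ n * 4 * ((n+1) * n.factorial) * ((∏ j ∈ Finset.range n, (ν + j + 1)) * (ν + n + 1)) := by
          ring

-- lower-bound core
lemma L2 (ν : ℝ) (hν : 1/2 < ν) (k : ℕ) :
    4^k * k.factorial * ∏ j ∈ Finset.range k, (ν + j + 1)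
      ≤ (2*(ν+1))^k * ((2*k).factorial : ℝ) := by
  induction k with
  | zero => simp
  | succ n ih =>
    have hP := prod_pos' ν (by linarith) n
    have hn : (0:ℝ) ≤ n := Nat.cast_nonneg n
    have e1 : 2*(n+1) = (2*n+1)+1 := by ring
    rw [e1, Nat.factorial_succ, Nat.factorial_succ, Nat.factorial_succ,
      Finset.prod_range_succ, pow_succ, pow_succ]
    push_cast
    have hfac : (0:ℝ) < (2*n).factorial := by positivity
    have h2 : 4 * ((n:ℝ)+1) * (ν + n + 1) ≤ (2*(ν+1)) * (((2*n+1)+1) * ((2*n+1))) := by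
      nlinarith [mul_nonneg (mul_nonneg (show (0:ℝ) ≤ (n:ℝ)+1 by linarith) hn)
        (show (0:ℝ) ≤ 2*ν+1 by linarith)]
    calc 4 ^ n * 4 * (((n:ℝ)+1) * n.factorial) * ((∏ j ∈ Finset.range n, (ν + j + 1)) * (ν + n + 1))
        = (4^n * n.factorial * ∏ j ∈ Finset.range n, (ν + j + 1)) * (4 * ((n:ℝ)+1) * (ν + n + 1)) := by
          ring
      _ ≤ ((2*(ν+1))^n * ((2*n).factorial : ℝ)) * ((2*(ν+1)) * (((2*n+1)+1) * ((2*n+1)))) := by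
          apply mul_le_mul ih h2 (by positivity) (by positivity)
      _ = (2*(ν+1))^n * (2*(ν+1)) * (((2*(n:ℝ)+1)+1) * ((2*(n:ℝ)+1) * (2*n).factorial)) := by
          ring

theorem besselI_ifantis_bounds (z ν : ℝ) (hz : 0 < z) (hν : 1/2 < ν) :
    Real.cosh z ^ (1 / (2 * (ν + 1))) < Real.Gamma (ν + 1) * (2 / z) ^ ν * besselI ν z ∧
      Real.Gamma (ν + 1) * (2 / z) ^ ν * besselI ν z < Real.cosh z := by
  have hν0 : (0:ℝ) < ν := by linarith
  rw [F_eq ν z hz hν]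
  have hb := summable_b ν z hν
  constructor
  · -- lower bound
    set c : ℝ := 2*(ν+1) with hc
    have hc1 : (1:ℝ) < c := by simp [hc]; linarith
    have hs : (1:ℝ) < Real.sqrt c := by
      rw [show (1:ℝ) = Real.sqrt 1 by simp]
      exact Real.sqrt_lt_sqrt zero_le_one hc1
    set a : ℝ := 1 / Real.sqrt c with ha
    have ha0 : 0 < a := by positivity
    have ha1 : a < 1 := by rw [ha]; rw [div_lt_one (by linarith)]; linarith
    have ha2 : a^2 = 1/c := by
      rw [ha, div_pow, one_pow, Real.sq_sqrt (by linarith : (0:ℝ) ≤ c)]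
    calc Real.cosh z ^ (1 / (2 * (ν + 1)))
        = Real.cosh z ^ (a^2) := by rw [ha2]
      _ < Real.cosh (a * z) := cosh_rpow_lt ha0 ha1 hz
      _ ≤ _ := by
          rw [Real.cosh_eq_tsum]
          apply Summable.tsum_le_tsum _ (Real.hasSum_cosh (a*z)).summable hb
          intro k
          have hP := prod_pos' ν hν0 k
          have hkf : (0:ℝ) < (k.factorial : ℝ) := by positivity
          have h2kf : (0:ℝ) < ((2*k).factorial : ℝ) := by positivity
          have e1 : (a*z) ^ (2*k) / ((2*k).factorial : ℝ)
              = (z^2)^k / (c^k * ((2*k).factorial : ℝ)) := by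
            rw [mul_pow, pow_mul, pow_mul, ha2]
            rw [div_pow, one_pow]
            field_simp
          have e2 : ((z/2)^2)^k / ((k.factorial : ℝ) * ∏ j ∈ Finset.range k, (ν + j + 1))
              = (z^2)^k / (4^k * ((k.factorial : ℝ) * ∏ j ∈ Finset.range k, (ν + j + 1))) := by
            rw [show (z/2)^2 = z^2/4 by ring, div_pow]
            rw [div_div]
          rw [e1, e2]
          apply div_le_div_of_nonneg_left (by positivity) (by positivity)
          calc 4^k * ((k.factorial : ℝ) * ∏ j ∈ Finset.range k, (ν + j + 1))
              = 4^k * (k.factorial : ℝ) * ∏ j ∈ Finset.range k, (ν + j + 1) := by ring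
            _ ≤ (2*(ν+1))^k * ((2*k).factorial : ℝ) := L2 ν hν k
            _ = c^k * ((2*k).factorial : ℝ) := by rw [hc]
  · -- upper bound
    rw [Real.cosh_eq_tsum z]
    apply Summable.tsum_lt_tsum_of_nonneg (i := 1)
    · intro k
      have hP := prod_pos' ν hν0 k
      positivity
    · intro k
      have hP := prod_pos' ν hν0 k
      have hkf : (0:ℝ) < (k.factorial : ℝ) := by positivity
      have h2kf : (0:ℝ) < ((2*k).factorial : ℝ) := by positivity
      have e2 : ((z/2)^2)^k / ((k.factorial : ℝ) * ∏ j ∈ Finset.range k, (ν + j + 1))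
          = (z^2)^k / (4^k * ((k.factorial : ℝ) * ∏ j ∈ Finset.range k, (ν + j + 1))) := by
        rw [show (z/2)^2 = z^2/4 by ring, div_pow, div_div]
      rw [e2, pow_mul]
      apply div_le_div_of_nonneg_left (by positivity) h2kf
      calc ((2*k).factorial : ℝ) ≤ 4^k * k.factorial * ∏ j ∈ Finset.range k, (ν + j + 1) :=
            L1 ν hν k
        _ = 4^k * ((k.factorial : ℝ) * ∏ j ∈ Finset.range k, (ν + j + 1)) := by ring
    · show ((z/2)^2)^1 / ((Nat.factorial 1 : ℝ) * ∏ j ∈ Finset.range 1, (ν + j + 1))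
          < z ^ (2*1) / ((2*1).factorial : ℝ)
      simp [Finset.prod_range_one, Nat.factorial]
      rw [div_lt_div_iff₀ (by positivity) (by norm_num : (0:ℝ) < 2)]
      nlinarith [sq_nonneg z, mul_pos hz hz]
    · exact (Real.hasSum_cosh z).summable
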